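/- For n = 30, the matrix M of the E₈ invariant, i.e., the coefficient matrix of |χ₁+χ₁₁+χ₁₉+χ₂₉|² + |χ₇+χ₁₃+χ₁₇+χ₂₃|², commutes with S and T, has nonnegative integer entries, and M_{11} = 1. -/
import Mathlib

open Real Finset Complex

noncomputable def zz : ℂ := Complex.exp (↑Real.pi * Complex.I / 30)
lemma zz_def : zz = Complex.exp (↑Real.pi * Complex.I / 30) := rfl

lemma hprim : IsPrimitiveRoot zz 60 := by
  have h : (2 * ↑Real.pi * Complex.I / 60 : ℂ) = ↑Real.pi * Complex.I / 30 := by ring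
  rw [zz_def, ← h]
  exact Complex.isPrimitiveRoot_exp 60 (by norm_num)

lemma hz : zz ^ 60 = 1 := hprim.pow_eq_one

lemma zinv (k m : ℕ) (h : (k + m) % 60 = 0) : (zz ^ k)⁻¹ = zz ^ m := by
  apply inv_eq_of_mul_eq_one_right
  rw [← pow_add]
  obtain ⟨t, ht⟩ := Nat.dvd_of_mod_eq_zero h
  rw [ht, pow_mul, hz, one_pow]

lemma zred (k : ℕ) : zz ^ k = zz ^ (k % 60) := by
  conv_lhs => rw [show k = 60 * (k / 60) + k % 60 from (Nat.div_add_mod k 60).symm]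
  rw [pow_add, pow_mul, hz, one_pow, one_mul]

lemma sin_nat (k m : ℕ) (h : (k + m) % 60 = 0) :
    (↑(Real.sin (↑k * Real.pi / 30)) : ℂ) = (zz ^ m - zz ^ k) * Complex.I / 2 := by
  rw [Complex.ofReal_sin, Complex.sin, neg_mul, Complex.exp_neg]
  push_cast
  rw [show ((k:ℂ) * ↑Real.pi / 30) * Complex.I = (k:ℕ) * (↑Real.pi * Complex.I / 30) by ring]
  rw [Complex.exp_nat_mul, ← zz_def, zinv k m h]

noncomputable def SSX (b : ℕ) : ℂ :=
  ↑(Real.sin (π * 1 * b / 30)) + ↑(Real.sin (π * 11 * b / 30)) +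
  ↑(Real.sin (π * 19 * b / 30)) + ↑(Real.sin (π * 29 * b / 30))
noncomputable def SSY (b : ℕ) : ℂ :=
  ↑(Real.sin (π * 7 * b / 30)) + ↑(Real.sin (π * 13 * b / 30)) +
  ↑(Real.sin (π * 17 * b / 30)) + ↑(Real.sin (π * 23 * b / 30))

lemma kX2 : SSX 2 = 0 := by
  simp only [SSX, SSY]
  rw [show (π * 1 * ((2:ℕ):ℝ) / 30) = ((2:ℕ):ℝ) * π / 30 by push_cast; ring]
  rw [show (π * 11 * ((2:ℕ):ℝ) / 30) = ((22:ℕ):ℝ) * π / 30 by push_cast; ring]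
  rw [show (π * 19 * ((2:ℕ):ℝ) / 30) = ((38:ℕ):ℝ) * π / 30 by push_cast; ring]
  rw [show (π * 29 * ((2:ℕ):ℝ) / 30) = ((58:ℕ):ℝ) * π / 30 by push_cast; ring]
  rw [sin_nat 2 58 (by norm_num), sin_nat 22 38 (by norm_num), sin_nat 38 22 (by norm_num), sin_nat 58 2 (by norm_num)]
  ring

lemma kX3 : SSX 3 = 0 := by
  simp only [SSX, SSY]
  rw [show (π * 1 * ((3:ℕ):ℝ) / 30) = ((3:ℕ):ℝ) * π / 30 by push_cast; ring]
  rw [show (π * 11 * ((3:ℕ):ℝ) / 30) = ((33:ℕ):ℝ) * π / 30 by push_cast; ring]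
  rw [show (π * 19 * ((3:ℕ):ℝ) / 30) = ((57:ℕ):ℝ) * π / 30 by push_cast; ring]
  rw [show (π * 29 * ((3:ℕ):ℝ) / 30) = ((87:ℕ):ℝ) * π / 30 by push_cast; ring]
  rw [sin_nat 3 57 (by norm_num), sin_nat 33 27 (by norm_num), sin_nat 57 3 (by norm_num), sin_nat 87 33 (by norm_num)]
  rw [zred 87]
  ring

lemma kX4 : SSX 4 = 0 := by
  simp only [SSX, SSY]
  rw [show (π * 1 * ((4:ℕ):ℝ) / 30) = ((4:ℕ):ℝ) * π / 30 by push_cast; ring]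
  rw [show (π * 11 * ((4:ℕ):ℝ) / 30) = ((44:ℕ):ℝ) * π / 30 by push_cast; ring]
  rw [show (π * 19 * ((4:ℕ):ℝ) / 30) = ((76:ℕ):ℝ) * π / 30 by push_cast; ring]
  rw [show (π * 29 * ((4:ℕ):ℝ) / 30) = ((116:ℕ):ℝ) * π / 30 by push_cast; ring]
  rw [sin_nat 4 56 (by norm_num), sin_nat 44 16 (by norm_num), sin_nat 76 44 (by norm_num), sin_nat 116 4 (by norm_num)]
  rw [zred 76, zred 116]
  ring

lemma kX5 : SSX 5 = 0 := by
  simp only [SSX, SSY]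
  rw [show (π * 1 * ((5:ℕ):ℝ) / 30) = ((5:ℕ):ℝ) * π / 30 by push_cast; ring]
  rw [show (π * 11 * ((5:ℕ):ℝ) / 30) = ((55:ℕ):ℝ) * π / 30 by push_cast; ring]
  rw [show (π * 19 * ((5:ℕ):ℝ) / 30) = ((95:ℕ):ℝ) * π / 30 by push_cast; ring]
  rw [show (π * 29 * ((5:ℕ):ℝ) / 30) = ((145:ℕ):ℝ) * π / 30 by push_cast; ring]
  rw [sin_nat 5 55 (by norm_num), sin_nat 55 5 (by norm_num), sin_nat 95 25 (by norm_num), sin_nat 145 35 (by norm_num)]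
  rw [zred 95, zred 145]
  ring

lemma kX6 : SSX 6 = 0 := by
  simp only [SSX, SSY]
  rw [show (π * 1 * ((6:ℕ):ℝ) / 30) = ((6:ℕ):ℝ) * π / 30 by push_cast; ring]
  rw [show (π * 11 * ((6:ℕ):ℝ) / 30) = ((66:ℕ):ℝ) * π / 30 by push_cast; ring]
  rw [show (π * 19 * ((6:ℕ):ℝ) / 30) = ((114:ℕ):ℝ) * π / 30 by push_cast; ring]
  rw [show (π * 29 * ((6:ℕ):ℝ) / 30) = ((174:ℕ):ℝ) * π / 30 by push_cast; ring]
  rw [sin_nat 6 54 (by norm_num), sin_nat 66 54 (by norm_num), sin_nat 114 6 (by norm_num), sin_nat 174 6 (by norm_num)]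
  rw [zred 66, zred 114, zred 174]
  ring

lemma kX8 : SSX 8 = 0 := by
  simp only [SSX, SSY]
  rw [show (π * 1 * ((8:ℕ):ℝ) / 30) = ((8:ℕ):ℝ) * π / 30 by push_cast; ring]
  rw [show (π * 11 * ((8:ℕ):ℝ) / 30) = ((88:ℕ):ℝ) * π / 30 by push_cast; ring]
  rw [show (π * 19 * ((8:ℕ):ℝ) / 30) = ((152:ℕ):ℝ) * π / 30 by push_cast; ring]
  rw [show (π * 29 * ((8:ℕ):ℝ) / 30) = ((232:ℕ):ℝ) * π / 30 by push_cast; ring]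
  rw [sin_nat 8 52 (by norm_num), sin_nat 88 32 (by norm_num), sin_nat 152 28 (by norm_num), sin_nat 232 8 (by norm_num)]
  rw [zred 88, zred 152, zred 232]
  ring

lemma kX9 : SSX 9 = 0 := by
  simp only [SSX, SSY]
  rw [show (π * 1 * ((9:ℕ):ℝ) / 30) = ((9:ℕ):ℝ) * π / 30 by push_cast; ring]
  rw [show (π * 11 * ((9:ℕ):ℝ) / 30) = ((99:ℕ):ℝ) * π / 30 by push_cast; ring]
  rw [show (π * 19 * ((9:ℕ):ℝ) / 30) = ((171:ℕ):ℝ) * π / 30 by push_cast; ring]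
  rw [show (π * 29 * ((9:ℕ):ℝ) / 30) = ((261:ℕ):ℝ) * π / 30 by push_cast; ring]
  rw [sin_nat 9 51 (by norm_num), sin_nat 99 21 (by norm_num), sin_nat 171 9 (by norm_num), sin_nat 261 39 (by norm_num)]
  rw [zred 99, zred 171, zred 261]
  ring

lemma kX10 : SSX 10 = 0 := by
  simp only [SSX, SSY]
  rw [show (π * 1 * ((10:ℕ):ℝ) / 30) = ((10:ℕ):ℝ) * π / 30 by push_cast; ring]
  rw [show (π * 11 * ((10:ℕ):ℝ) / 30) = ((110:ℕ):ℝ) * π / 30 by push_cast; ring]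
  rw [show (π * 19 * ((10:ℕ):ℝ) / 30) = ((190:ℕ):ℝ) * π / 30 by push_cast; ring]
  rw [show (π * 29 * ((10:ℕ):ℝ) / 30) = ((290:ℕ):ℝ) * π / 30 by push_cast; ring]
  rw [sin_nat 10 50 (by norm_num), sin_nat 110 10 (by norm_num), sin_nat 190 50 (by norm_num), sin_nat 290 10 (by norm_num)]
  rw [zred 110, zred 190, zred 290]
  ring

lemma kX11 : SSX 11 = SSX 1 := by
  simp only [SSX, SSY]
  rw [show (π * 1 * ((11:ℕ):ℝ) / 30) = ((11:ℕ):ℝ) * π / 30 by push_cast; ring]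
  rw [show (π * 11 * ((11:ℕ):ℝ) / 30) = ((121:ℕ):ℝ) * π / 30 by push_cast; ring]
  rw [show (π * 19 * ((11:ℕ):ℝ) / 30) = ((209:ℕ):ℝ) * π / 30 by push_cast; ring]
  rw [show (π * 29 * ((11:ℕ):ℝ) / 30) = ((319:ℕ):ℝ) * π / 30 by push_cast; ring]
  rw [show (π * 1 * ((1:ℕ):ℝ) / 30) = ((1:ℕ):ℝ) * π / 30 by push_cast; ring]
  rw [show (π * 11 * ((1:ℕ):ℝ) / 30) = ((11:ℕ):ℝ) * π / 30 by push_cast; ring]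
  rw [show (π * 19 * ((1:ℕ):ℝ) / 30) = ((19:ℕ):ℝ) * π / 30 by push_cast; ring]
  rw [show (π * 29 * ((1:ℕ):ℝ) / 30) = ((29:ℕ):ℝ) * π / 30 by push_cast; ring]
  rw [sin_nat 11 49 (by norm_num), sin_nat 121 59 (by norm_num), sin_nat 209 31 (by norm_num), sin_nat 319 41 (by norm_num), sin_nat 1 59 (by norm_num), sin_nat 19 41 (by norm_num), sin_nat 29 31 (by norm_num)]
  rw [zred 121, zred 209, zred 319]
  ring

lemma kX12 : SSX 12 = 0 := by
  simp only [SSX, SSY]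
  rw [show (π * 1 * ((12:ℕ):ℝ) / 30) = ((12:ℕ):ℝ) * π / 30 by push_cast; ring]
  rw [show (π * 11 * ((12:ℕ):ℝ) / 30) = ((132:ℕ):ℝ) * π / 30 by push_cast; ring]
  rw [show (π * 19 * ((12:ℕ):ℝ) / 30) = ((228:ℕ):ℝ) * π / 30 by push_cast; ring]
  rw [show (π * 29 * ((12:ℕ):ℝ) / 30) = ((348:ℕ):ℝ) * π / 30 by push_cast; ring]
  rw [sin_nat 12 48 (by norm_num), sin_nat 132 48 (by norm_num), sin_nat 228 12 (by norm_num), sin_nat 348 12 (by norm_num)]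
  rw [zred 132, zred 228, zred 348]
  ring

lemma kX13 : SSX 13 = SSX 7 := by
  simp only [SSX, SSY]
  rw [show (π * 1 * ((13:ℕ):ℝ) / 30) = ((13:ℕ):ℝ) * π / 30 by push_cast; ring]
  rw [show (π * 11 * ((13:ℕ):ℝ) / 30) = ((143:ℕ):ℝ) * π / 30 by push_cast; ring]
  rw [show (π * 19 * ((13:ℕ):ℝ) / 30) = ((247:ℕ):ℝ) * π / 30 by push_cast; ring]
  rw [show (π * 29 * ((13:ℕ):ℝ) / 30) = ((377:ℕ):ℝ) * π / 30 by push_cast; ring]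
  rw [show (π * 1 * ((7:ℕ):ℝ) / 30) = ((7:ℕ):ℝ) * π / 30 by push_cast; ring]
  rw [show (π * 11 * ((7:ℕ):ℝ) / 30) = ((77:ℕ):ℝ) * π / 30 by push_cast; ring]
  rw [show (π * 19 * ((7:ℕ):ℝ) / 30) = ((133:ℕ):ℝ) * π / 30 by push_cast; ring]
  rw [show (π * 29 * ((7:ℕ):ℝ) / 30) = ((203:ℕ):ℝ) * π / 30 by push_cast; ring]
  rw [sin_nat 13 47 (by norm_num), sin_nat 143 37 (by norm_num), sin_nat 247 53 (by norm_num), sin_nat 377 43 (by norm_num), sin_nat 7 53 (by norm_num), sin_nat 77 43 (by norm_num), sin_nat 133 47 (by norm_num), sin_nat 203 37 (by norm_num)]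
  rw [zred 77, zred 133, zred 143, zred 203, zred 247, zred 377]
  ring

lemma kX14 : SSX 14 = 0 := by
  simp only [SSX, SSY]
  rw [show (π * 1 * ((14:ℕ):ℝ) / 30) = ((14:ℕ):ℝ) * π / 30 by push_cast; ring]
  rw [show (π * 11 * ((14:ℕ):ℝ) / 30) = ((154:ℕ):ℝ) * π / 30 by push_cast; ring]
  rw [show (π * 19 * ((14:ℕ):ℝ) / 30) = ((266:ℕ):ℝ) * π / 30 by push_cast; ring]
  rw [show (π * 29 * ((14:ℕ):ℝ) / 30) = ((406:ℕ):ℝ) * π / 30 by push_cast; ring]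
  rw [sin_nat 14 46 (by norm_num), sin_nat 154 26 (by norm_num), sin_nat 266 34 (by norm_num), sin_nat 406 14 (by norm_num)]
  rw [zred 154, zred 266, zred 406]
  ring

lemma kX15 : SSX 15 = 0 := by
  simp only [SSX, SSY]
  rw [show (π * 1 * ((15:ℕ):ℝ) / 30) = ((15:ℕ):ℝ) * π / 30 by push_cast; ring]
  rw [show (π * 11 * ((15:ℕ):ℝ) / 30) = ((165:ℕ):ℝ) * π / 30 by push_cast; ring]
  rw [show (π * 19 * ((15:ℕ):ℝ) / 30) = ((285:ℕ):ℝ) * π / 30 by push_cast; ring]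
  rw [show (π * 29 * ((15:ℕ):ℝ) / 30) = ((435:ℕ):ℝ) * π / 30 by push_cast; ring]
  rw [sin_nat 15 45 (by norm_num), sin_nat 165 15 (by norm_num), sin_nat 285 15 (by norm_num), sin_nat 435 45 (by norm_num)]
  rw [zred 165, zred 285, zred 435]
  ring

lemma kX16 : SSX 16 = 0 := by
  simp only [SSX, SSY]
  rw [show (π * 1 * ((16:ℕ):ℝ) / 30) = ((16:ℕ):ℝ) * π / 30 by push_cast; ring]
  rw [show (π * 11 * ((16:ℕ):ℝ) / 30) = ((176:ℕ):ℝ) * π / 30 by push_cast; ring]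
  rw [show (π * 19 * ((16:ℕ):ℝ) / 30) = ((304:ℕ):ℝ) * π / 30 by push_cast; ring]
  rw [show (π * 29 * ((16:ℕ):ℝ) / 30) = ((464:ℕ):ℝ) * π / 30 by push_cast; ring]
  rw [sin_nat 16 44 (by norm_num), sin_nat 176 4 (by norm_num), sin_nat 304 56 (by norm_num), sin_nat 464 16 (by norm_num)]
  rw [zred 176, zred 304, zred 464]
  ring

lemma kX17 : SSX 17 = SSX 7 := by
  simp only [SSX, SSY]
  rw [show (π * 1 * ((17:ℕ):ℝ) / 30) = ((17:ℕ):ℝ) * π / 30 by push_cast; ring]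
  rw [show (π * 11 * ((17:ℕ):ℝ) / 30) = ((187:ℕ):ℝ) * π / 30 by push_cast; ring]
  rw [show (π * 19 * ((17:ℕ):ℝ) / 30) = ((323:ℕ):ℝ) * π / 30 by push_cast; ring]
  rw [show (π * 29 * ((17:ℕ):ℝ) / 30) = ((493:ℕ):ℝ) * π / 30 by push_cast; ring]
  rw [show (π * 1 * ((7:ℕ):ℝ) / 30) = ((7:ℕ):ℝ) * π / 30 by push_cast; ring]
  rw [show (π * 11 * ((7:ℕ):ℝ) / 30) = ((77:ℕ):ℝ) * π / 30 by push_cast; ring]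
  rw [show (π * 19 * ((7:ℕ):ℝ) / 30) = ((133:ℕ):ℝ) * π / 30 by push_cast; ring]
  rw [show (π * 29 * ((7:ℕ):ℝ) / 30) = ((203:ℕ):ℝ) * π / 30 by push_cast; ring]
  rw [sin_nat 17 43 (by norm_num), sin_nat 187 53 (by norm_num), sin_nat 323 37 (by norm_num), sin_nat 493 47 (by norm_num), sin_nat 7 53 (by norm_num), sin_nat 77 43 (by norm_num), sin_nat 133 47 (by norm_num), sin_nat 203 37 (by norm_num)]
  rw [zred 77, zred 133, zred 187, zred 203, zred 323, zred 493]
  ring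

lemma kX18 : SSX 18 = 0 := by
  simp only [SSX, SSY]
  rw [show (π * 1 * ((18:ℕ):ℝ) / 30) = ((18:ℕ):ℝ) * π / 30 by push_cast; ring]
  rw [show (π * 11 * ((18:ℕ):ℝ) / 30) = ((198:ℕ):ℝ) * π / 30 by push_cast; ring]
  rw [show (π * 19 * ((18:ℕ):ℝ) / 30) = ((342:ℕ):ℝ) * π / 30 by push_cast; ring]
  rw [show (π * 29 * ((18:ℕ):ℝ) / 30) = ((522:ℕ):ℝ) * π / 30 by push_cast; ring]
  rw [sin_nat 18 42 (by norm_num), sin_nat 198 42 (by norm_num), sin_nat 342 18 (by norm_num), sin_nat 522 18 (by norm_num)]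
  rw [zred 198, zred 342, zred 522]
  ring

lemma kX19 : SSX 19 = SSX 1 := by
  simp only [SSX, SSY]
  rw [show (π * 1 * ((19:ℕ):ℝ) / 30) = ((19:ℕ):ℝ) * π / 30 by push_cast; ring]
  rw [show (π * 11 * ((19:ℕ):ℝ) / 30) = ((209:ℕ):ℝ) * π / 30 by push_cast; ring]
  rw [show (π * 19 * ((19:ℕ):ℝ) / 30) = ((361:ℕ):ℝ) * π / 30 by push_cast; ring]
  rw [show (π * 29 * ((19:ℕ):ℝ) / 30) = ((551:ℕ):ℝ) * π / 30 by push_cast; ring]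
  rw [show (π * 1 * ((1:ℕ):ℝ) / 30) = ((1:ℕ):ℝ) * π / 30 by push_cast; ring]
  rw [show (π * 11 * ((1:ℕ):ℝ) / 30) = ((11:ℕ):ℝ) * π / 30 by push_cast; ring]
  rw [show (π * 19 * ((1:ℕ):ℝ) / 30) = ((19:ℕ):ℝ) * π / 30 by push_cast; ring]
  rw [show (π * 29 * ((1:ℕ):ℝ) / 30) = ((29:ℕ):ℝ) * π / 30 by push_cast; ring]
  rw [sin_nat 19 41 (by norm_num), sin_nat 209 31 (by norm_num), sin_nat 361 59 (by norm_num), sin_nat 551 49 (by norm_num), sin_nat 1 59 (by norm_num), sin_nat 11 49 (by norm_num), sin_nat 29 31 (by norm_num)]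
  rw [zred 209, zred 361, zred 551]
  ring

lemma kX20 : SSX 20 = 0 := by
  simp only [SSX, SSY]
  rw [show (π * 1 * ((20:ℕ):ℝ) / 30) = ((20:ℕ):ℝ) * π / 30 by push_cast; ring]
  rw [show (π * 11 * ((20:ℕ):ℝ) / 30) = ((220:ℕ):ℝ) * π / 30 by push_cast; ring]
  rw [show (π * 19 * ((20:ℕ):ℝ) / 30) = ((380:ℕ):ℝ) * π / 30 by push_cast; ring]
  rw [show (π * 29 * ((20:ℕ):ℝ) / 30) = ((580:ℕ):ℝ) * π / 30 by push_cast; ring]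
  rw [sin_nat 20 40 (by norm_num), sin_nat 220 20 (by norm_num), sin_nat 380 40 (by norm_num), sin_nat 580 20 (by norm_num)]
  rw [zred 220, zred 380, zred 580]
  ring

lemma kX21 : SSX 21 = 0 := by
  simp only [SSX, SSY]
  rw [show (π * 1 * ((21:ℕ):ℝ) / 30) = ((21:ℕ):ℝ) * π / 30 by push_cast; ring]
  rw [show (π * 11 * ((21:ℕ):ℝ) / 30) = ((231:ℕ):ℝ) * π / 30 by push_cast; ring]
  rw [show (π * 19 * ((21:ℕ):ℝ) / 30) = ((399:ℕ):ℝ) * π / 30 by push_cast; ring]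
  rw [show (π * 29 * ((21:ℕ):ℝ) / 30) = ((609:ℕ):ℝ) * π / 30 by push_cast; ring]
  rw [sin_nat 21 39 (by norm_num), sin_nat 231 9 (by norm_num), sin_nat 399 21 (by norm_num), sin_nat 609 51 (by norm_num)]
  rw [zred 231, zred 399, zred 609]
  ring

lemma kX22 : SSX 22 = 0 := by
  simp only [SSX, SSY]
  rw [show (π * 1 * ((22:ℕ):ℝ) / 30) = ((22:ℕ):ℝ) * π / 30 by push_cast; ring]
  rw [show (π * 11 * ((22:ℕ):ℝ) / 30) = ((242:ℕ):ℝ) * π / 30 by push_cast; ring]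
  rw [show (π * 19 * ((22:ℕ):ℝ) / 30) = ((418:ℕ):ℝ) * π / 30 by push_cast; ring]
  rw [show (π * 29 * ((22:ℕ):ℝ) / 30) = ((638:ℕ):ℝ) * π / 30 by push_cast; ring]
  rw [sin_nat 22 38 (by norm_num), sin_nat 242 58 (by norm_num), sin_nat 418 2 (by norm_num), sin_nat 638 22 (by norm_num)]
  rw [zred 242, zred 418, zred 638]
  ring

lemma kX23 : SSX 23 = SSX 7 := by
  simp only [SSX, SSY]
  rw [show (π * 1 * ((23:ℕ):ℝ) / 30) = ((23:ℕ):ℝ) * π / 30 by push_cast; ring]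
  rw [show (π * 11 * ((23:ℕ):ℝ) / 30) = ((253:ℕ):ℝ) * π / 30 by push_cast; ring]
  rw [show (π * 19 * ((23:ℕ):ℝ) / 30) = ((437:ℕ):ℝ) * π / 30 by push_cast; ring]
  rw [show (π * 29 * ((23:ℕ):ℝ) / 30) = ((667:ℕ):ℝ) * π / 30 by push_cast; ring]
  rw [show (π * 1 * ((7:ℕ):ℝ) / 30) = ((7:ℕ):ℝ) * π / 30 by push_cast; ring]
  rw [show (π * 11 * ((7:ℕ):ℝ) / 30) = ((77:ℕ):ℝ) * π / 30 by push_cast; ring]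
  rw [show (π * 19 * ((7:ℕ):ℝ) / 30) = ((133:ℕ):ℝ) * π / 30 by push_cast; ring]
  rw [show (π * 29 * ((7:ℕ):ℝ) / 30) = ((203:ℕ):ℝ) * π / 30 by push_cast; ring]
  rw [sin_nat 23 37 (by norm_num), sin_nat 253 47 (by norm_num), sin_nat 437 43 (by norm_num), sin_nat 667 53 (by norm_num), sin_nat 7 53 (by norm_num), sin_nat 77 43 (by norm_num), sin_nat 133 47 (by norm_num), sin_nat 203 37 (by norm_num)]
  rw [zred 77, zred 133, zred 203, zred 253, zred 437, zred 667]
  ring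

lemma kX24 : SSX 24 = 0 := by
  simp only [SSX, SSY]
  rw [show (π * 1 * ((24:ℕ):ℝ) / 30) = ((24:ℕ):ℝ) * π / 30 by push_cast; ring]
  rw [show (π * 11 * ((24:ℕ):ℝ) / 30) = ((264:ℕ):ℝ) * π / 30 by push_cast; ring]
  rw [show (π * 19 * ((24:ℕ):ℝ) / 30) = ((456:ℕ):ℝ) * π / 30 by push_cast; ring]
  rw [show (π * 29 * ((24:ℕ):ℝ) / 30) = ((696:ℕ):ℝ) * π / 30 by push_cast; ring]
  rw [sin_nat 24 36 (by norm_num), sin_nat 264 36 (by norm_num), sin_nat 456 24 (by norm_num), sin_nat 696 24 (by norm_num)]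
  rw [zred 264, zred 456, zred 696]
  ring

lemma kX25 : SSX 25 = 0 := by
  simp only [SSX, SSY]
  rw [show (π * 1 * ((25:ℕ):ℝ) / 30) = ((25:ℕ):ℝ) * π / 30 by push_cast; ring]
  rw [show (π * 11 * ((25:ℕ):ℝ) / 30) = ((275:ℕ):ℝ) * π / 30 by push_cast; ring]
  rw [show (π * 19 * ((25:ℕ):ℝ) / 30) = ((475:ℕ):ℝ) * π / 30 by push_cast; ring]
  rw [show (π * 29 * ((25:ℕ):ℝ) / 30) = ((725:ℕ):ℝ) * π / 30 by push_cast; ring]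
  rw [sin_nat 25 35 (by norm_num), sin_nat 275 25 (by norm_num), sin_nat 475 5 (by norm_num), sin_nat 725 55 (by norm_num)]
  rw [zred 275, zred 475, zred 725]
  ring

lemma kX26 : SSX 26 = 0 := by
  simp only [SSX, SSY]
  rw [show (π * 1 * ((26:ℕ):ℝ) / 30) = ((26:ℕ):ℝ) * π / 30 by push_cast; ring]
  rw [show (π * 11 * ((26:ℕ):ℝ) / 30) = ((286:ℕ):ℝ) * π / 30 by push_cast; ring]
  rw [show (π * 19 * ((26:ℕ):ℝ) / 30) = ((494:ℕ):ℝ) * π / 30 by push_cast; ring]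
  rw [show (π * 29 * ((26:ℕ):ℝ) / 30) = ((754:ℕ):ℝ) * π / 30 by push_cast; ring]
  rw [sin_nat 26 34 (by norm_num), sin_nat 286 14 (by norm_num), sin_nat 494 46 (by norm_num), sin_nat 754 26 (by norm_num)]
  rw [zred 286, zred 494, zred 754]
  ring

lemma kX27 : SSX 27 = 0 := by
  simp only [SSX, SSY]
  rw [show (π * 1 * ((27:ℕ):ℝ) / 30) = ((27:ℕ):ℝ) * π / 30 by push_cast; ring]
  rw [show (π * 11 * ((27:ℕ):ℝ) / 30) = ((297:ℕ):ℝ) * π / 30 by push_cast; ring]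
  rw [show (π * 19 * ((27:ℕ):ℝ) / 30) = ((513:ℕ):ℝ) * π / 30 by push_cast; ring]
  rw [show (π * 29 * ((27:ℕ):ℝ) / 30) = ((783:ℕ):ℝ) * π / 30 by push_cast; ring]
  rw [sin_nat 27 33 (by norm_num), sin_nat 297 3 (by norm_num), sin_nat 513 27 (by norm_num), sin_nat 783 57 (by norm_num)]
  rw [zred 297, zred 513, zred 783]
  ring

lemma kX28 : SSX 28 = 0 := by
  simp only [SSX, SSY]
  rw [show (π * 1 * ((28:ℕ):ℝ) / 30) = ((28:ℕ):ℝ) * π / 30 by push_cast; ring]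
  rw [show (π * 11 * ((28:ℕ):ℝ) / 30) = ((308:ℕ):ℝ) * π / 30 by push_cast; ring]
  rw [show (π * 19 * ((28:ℕ):ℝ) / 30) = ((532:ℕ):ℝ) * π / 30 by push_cast; ring]
  rw [show (π * 29 * ((28:ℕ):ℝ) / 30) = ((812:ℕ):ℝ) * π / 30 by push_cast; ring]
  rw [sin_nat 28 32 (by norm_num), sin_nat 308 52 (by norm_num), sin_nat 532 8 (by norm_num), sin_nat 812 28 (by norm_num)]
  rw [zred 308, zred 532, zred 812]
  ring

lemma kX29 : SSX 29 = SSX 1 := by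
  simp only [SSX, SSY]
  rw [show (π * 1 * ((29:ℕ):ℝ) / 30) = ((29:ℕ):ℝ) * π / 30 by push_cast; ring]
  rw [show (π * 11 * ((29:ℕ):ℝ) / 30) = ((319:ℕ):ℝ) * π / 30 by push_cast; ring]
  rw [show (π * 19 * ((29:ℕ):ℝ) / 30) = ((551:ℕ):ℝ) * π / 30 by push_cast; ring]
  rw [show (π * 29 * ((29:ℕ):ℝ) / 30) = ((841:ℕ):ℝ) * π / 30 by push_cast; ring]
  rw [show (π * 1 * ((1:ℕ):ℝ) / 30) = ((1:ℕ):ℝ) * π / 30 by push_cast; ring]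
  rw [show (π * 11 * ((1:ℕ):ℝ) / 30) = ((11:ℕ):ℝ) * π / 30 by push_cast; ring]
  rw [show (π * 19 * ((1:ℕ):ℝ) / 30) = ((19:ℕ):ℝ) * π / 30 by push_cast; ring]
  rw [show (π * 29 * ((1:ℕ):ℝ) / 30) = ((29:ℕ):ℝ) * π / 30 by push_cast; ring]
  rw [sin_nat 29 31 (by norm_num), sin_nat 319 41 (by norm_num), sin_nat 551 49 (by norm_num), sin_nat 841 59 (by norm_num), sin_nat 1 59 (by norm_num), sin_nat 11 49 (by norm_num), sin_nat 19 41 (by norm_num)]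
  rw [zred 319, zred 551, zred 841]
  ring

lemma kY1 : SSY 1 = SSX 7 := by
  simp only [SSX, SSY]
  rw [show (π * 7 * ((1:ℕ):ℝ) / 30) = ((7:ℕ):ℝ) * π / 30 by push_cast; ring]
  rw [show (π * 13 * ((1:ℕ):ℝ) / 30) = ((13:ℕ):ℝ) * π / 30 by push_cast; ring]
  rw [show (π * 17 * ((1:ℕ):ℝ) / 30) = ((17:ℕ):ℝ) * π / 30 by push_cast; ring]
  rw [show (π * 23 * ((1:ℕ):ℝ) / 30) = ((23:ℕ):ℝ) * π / 30 by push_cast; ring]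
  rw [show (π * 1 * ((7:ℕ):ℝ) / 30) = ((7:ℕ):ℝ) * π / 30 by push_cast; ring]
  rw [show (π * 11 * ((7:ℕ):ℝ) / 30) = ((77:ℕ):ℝ) * π / 30 by push_cast; ring]
  rw [show (π * 19 * ((7:ℕ):ℝ) / 30) = ((133:ℕ):ℝ) * π / 30 by push_cast; ring]
  rw [show (π * 29 * ((7:ℕ):ℝ) / 30) = ((203:ℕ):ℝ) * π / 30 by push_cast; ring]
  rw [sin_nat 7 53 (by norm_num), sin_nat 13 47 (by norm_num), sin_nat 17 43 (by norm_num), sin_nat 23 37 (by norm_num), sin_nat 77 43 (by norm_num), sin_nat 133 47 (by norm_num), sin_nat 203 37 (by norm_num)]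
  rw [zred 77, zred 133, zred 203]
  ring

lemma kY2 : SSY 2 = 0 := by
  simp only [SSX, SSY]
  rw [show (π * 7 * ((2:ℕ):ℝ) / 30) = ((14:ℕ):ℝ) * π / 30 by push_cast; ring]
  rw [show (π * 13 * ((2:ℕ):ℝ) / 30) = ((26:ℕ):ℝ) * π / 30 by push_cast; ring]
  rw [show (π * 17 * ((2:ℕ):ℝ) / 30) = ((34:ℕ):ℝ) * π / 30 by push_cast; ring]
  rw [show (π * 23 * ((2:ℕ):ℝ) / 30) = ((46:ℕ):ℝ) * π / 30 by push_cast; ring]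
  rw [sin_nat 14 46 (by norm_num), sin_nat 26 34 (by norm_num), sin_nat 34 26 (by norm_num), sin_nat 46 14 (by norm_num)]
  ring

lemma kY3 : SSY 3 = 0 := by
  simp only [SSX, SSY]
  rw [show (π * 7 * ((3:ℕ):ℝ) / 30) = ((21:ℕ):ℝ) * π / 30 by push_cast; ring]
  rw [show (π * 13 * ((3:ℕ):ℝ) / 30) = ((39:ℕ):ℝ) * π / 30 by push_cast; ring]
  rw [show (π * 17 * ((3:ℕ):ℝ) / 30) = ((51:ℕ):ℝ) * π / 30 by push_cast; ring]
  rw [show (π * 23 * ((3:ℕ):ℝ) / 30) = ((69:ℕ):ℝ) * π / 30 by push_cast; ring]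
  rw [sin_nat 21 39 (by norm_num), sin_nat 39 21 (by norm_num), sin_nat 51 9 (by norm_num), sin_nat 69 51 (by norm_num)]
  rw [zred 69]
  ring

lemma kY4 : SSY 4 = 0 := by
  simp only [SSX, SSY]
  rw [show (π * 7 * ((4:ℕ):ℝ) / 30) = ((28:ℕ):ℝ) * π / 30 by push_cast; ring]
  rw [show (π * 13 * ((4:ℕ):ℝ) / 30) = ((52:ℕ):ℝ) * π / 30 by push_cast; ring]
  rw [show (π * 17 * ((4:ℕ):ℝ) / 30) = ((68:ℕ):ℝ) * π / 30 by push_cast; ring]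
  rw [show (π * 23 * ((4:ℕ):ℝ) / 30) = ((92:ℕ):ℝ) * π / 30 by push_cast; ring]
  rw [sin_nat 28 32 (by norm_num), sin_nat 52 8 (by norm_num), sin_nat 68 52 (by norm_num), sin_nat 92 28 (by norm_num)]
  rw [zred 68, zred 92]
  ring

lemma kY5 : SSY 5 = 0 := by
  simp only [SSX, SSY]
  rw [show (π * 7 * ((5:ℕ):ℝ) / 30) = ((35:ℕ):ℝ) * π / 30 by push_cast; ring]
  rw [show (π * 13 * ((5:ℕ):ℝ) / 30) = ((65:ℕ):ℝ) * π / 30 by push_cast; ring]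
  rw [show (π * 17 * ((5:ℕ):ℝ) / 30) = ((85:ℕ):ℝ) * π / 30 by push_cast; ring]
  rw [show (π * 23 * ((5:ℕ):ℝ) / 30) = ((115:ℕ):ℝ) * π / 30 by push_cast; ring]
  rw [sin_nat 35 25 (by norm_num), sin_nat 65 55 (by norm_num), sin_nat 85 35 (by norm_num), sin_nat 115 5 (by norm_num)]
  rw [zred 65, zred 85, zred 115]
  ring

lemma kY6 : SSY 6 = 0 := by
  simp only [SSX, SSY]
  rw [show (π * 7 * ((6:ℕ):ℝ) / 30) = ((42:ℕ):ℝ) * π / 30 by push_cast; ring]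
  rw [show (π * 13 * ((6:ℕ):ℝ) / 30) = ((78:ℕ):ℝ) * π / 30 by push_cast; ring]
  rw [show (π * 17 * ((6:ℕ):ℝ) / 30) = ((102:ℕ):ℝ) * π / 30 by push_cast; ring]
  rw [show (π * 23 * ((6:ℕ):ℝ) / 30) = ((138:ℕ):ℝ) * π / 30 by push_cast; ring]
  rw [sin_nat 42 18 (by norm_num), sin_nat 78 42 (by norm_num), sin_nat 102 18 (by norm_num), sin_nat 138 42 (by norm_num)]
  rw [zred 78, zred 102, zred 138]
  ring

lemma kY7 : SSY 7 = -SSX 1 := by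
  simp only [SSX, SSY]
  rw [show (π * 7 * ((7:ℕ):ℝ) / 30) = ((49:ℕ):ℝ) * π / 30 by push_cast; ring]
  rw [show (π * 13 * ((7:ℕ):ℝ) / 30) = ((91:ℕ):ℝ) * π / 30 by push_cast; ring]
  rw [show (π * 17 * ((7:ℕ):ℝ) / 30) = ((119:ℕ):ℝ) * π / 30 by push_cast; ring]
  rw [show (π * 23 * ((7:ℕ):ℝ) / 30) = ((161:ℕ):ℝ) * π / 30 by push_cast; ring]
  rw [show (π * 1 * ((1:ℕ):ℝ) / 30) = ((1:ℕ):ℝ) * π / 30 by push_cast; ring]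
  rw [show (π * 11 * ((1:ℕ):ℝ) / 30) = ((11:ℕ):ℝ) * π / 30 by push_cast; ring]
  rw [show (π * 19 * ((1:ℕ):ℝ) / 30) = ((19:ℕ):ℝ) * π / 30 by push_cast; ring]
  rw [show (π * 29 * ((1:ℕ):ℝ) / 30) = ((29:ℕ):ℝ) * π / 30 by push_cast; ring]
  rw [sin_nat 49 11 (by norm_num), sin_nat 91 29 (by norm_num), sin_nat 119 1 (by norm_num), sin_nat 161 19 (by norm_num), sin_nat 1 59 (by norm_num), sin_nat 11 49 (by norm_num), sin_nat 19 41 (by norm_num), sin_nat 29 31 (by norm_num)]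
  rw [zred 91, zred 119, zred 161]
  ring

lemma kY8 : SSY 8 = 0 := by
  simp only [SSX, SSY]
  rw [show (π * 7 * ((8:ℕ):ℝ) / 30) = ((56:ℕ):ℝ) * π / 30 by push_cast; ring]
  rw [show (π * 13 * ((8:ℕ):ℝ) / 30) = ((104:ℕ):ℝ) * π / 30 by push_cast; ring]
  rw [show (π * 17 * ((8:ℕ):ℝ) / 30) = ((136:ℕ):ℝ) * π / 30 by push_cast; ring]
  rw [show (π * 23 * ((8:ℕ):ℝ) / 30) = ((184:ℕ):ℝ) * π / 30 by push_cast; ring]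
  rw [sin_nat 56 4 (by norm_num), sin_nat 104 16 (by norm_num), sin_nat 136 44 (by norm_num), sin_nat 184 56 (by norm_num)]
  rw [zred 104, zred 136, zred 184]
  ring

lemma kY9 : SSY 9 = 0 := by
  simp only [SSX, SSY]
  rw [show (π * 7 * ((9:ℕ):ℝ) / 30) = ((63:ℕ):ℝ) * π / 30 by push_cast; ring]
  rw [show (π * 13 * ((9:ℕ):ℝ) / 30) = ((117:ℕ):ℝ) * π / 30 by push_cast; ring]
  rw [show (π * 17 * ((9:ℕ):ℝ) / 30) = ((153:ℕ):ℝ) * π / 30 by push_cast; ring]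
  rw [show (π * 23 * ((9:ℕ):ℝ) / 30) = ((207:ℕ):ℝ) * π / 30 by push_cast; ring]
  rw [sin_nat 63 57 (by norm_num), sin_nat 117 3 (by norm_num), sin_nat 153 27 (by norm_num), sin_nat 207 33 (by norm_num)]
  rw [zred 63, zred 117, zred 153, zred 207]
  ring

lemma kY10 : SSY 10 = 0 := by
  simp only [SSX, SSY]
  rw [show (π * 7 * ((10:ℕ):ℝ) / 30) = ((70:ℕ):ℝ) * π / 30 by push_cast; ring]
  rw [show (π * 13 * ((10:ℕ):ℝ) / 30) = ((130:ℕ):ℝ) * π / 30 by push_cast; ring]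
  rw [show (π * 17 * ((10:ℕ):ℝ) / 30) = ((170:ℕ):ℝ) * π / 30 by push_cast; ring]
  rw [show (π * 23 * ((10:ℕ):ℝ) / 30) = ((230:ℕ):ℝ) * π / 30 by push_cast; ring]
  rw [sin_nat 70 50 (by norm_num), sin_nat 130 50 (by norm_num), sin_nat 170 10 (by norm_num), sin_nat 230 10 (by norm_num)]
  rw [zred 70, zred 130, zred 170, zred 230]
  ring

lemma kY11 : SSY 11 = SSX 7 := by
  simp only [SSX, SSY]
  rw [show (π * 7 * ((11:ℕ):ℝ) / 30) = ((77:ℕ):ℝ) * π / 30 by push_cast; ring]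
  rw [show (π * 13 * ((11:ℕ):ℝ) / 30) = ((143:ℕ):ℝ) * π / 30 by push_cast; ring]
  rw [show (π * 17 * ((11:ℕ):ℝ) / 30) = ((187:ℕ):ℝ) * π / 30 by push_cast; ring]
  rw [show (π * 23 * ((11:ℕ):ℝ) / 30) = ((253:ℕ):ℝ) * π / 30 by push_cast; ring]
  rw [show (π * 1 * ((7:ℕ):ℝ) / 30) = ((7:ℕ):ℝ) * π / 30 by push_cast; ring]
  rw [show (π * 11 * ((7:ℕ):ℝ) / 30) = ((77:ℕ):ℝ) * π / 30 by push_cast; ring]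
  rw [show (π * 19 * ((7:ℕ):ℝ) / 30) = ((133:ℕ):ℝ) * π / 30 by push_cast; ring]
  rw [show (π * 29 * ((7:ℕ):ℝ) / 30) = ((203:ℕ):ℝ) * π / 30 by push_cast; ring]
  rw [sin_nat 77 43 (by norm_num), sin_nat 143 37 (by norm_num), sin_nat 187 53 (by norm_num), sin_nat 253 47 (by norm_num), sin_nat 7 53 (by norm_num), sin_nat 133 47 (by norm_num), sin_nat 203 37 (by norm_num)]
  rw [zred 77, zred 133, zred 143, zred 187, zred 203, zred 253]
  ring

lemma kY12 : SSY 12 = 0 := by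
  simp only [SSX, SSY]
  rw [show (π * 7 * ((12:ℕ):ℝ) / 30) = ((84:ℕ):ℝ) * π / 30 by push_cast; ring]
  rw [show (π * 13 * ((12:ℕ):ℝ) / 30) = ((156:ℕ):ℝ) * π / 30 by push_cast; ring]
  rw [show (π * 17 * ((12:ℕ):ℝ) / 30) = ((204:ℕ):ℝ) * π / 30 by push_cast; ring]
  rw [show (π * 23 * ((12:ℕ):ℝ) / 30) = ((276:ℕ):ℝ) * π / 30 by push_cast; ring]
  rw [sin_nat 84 36 (by norm_num), sin_nat 156 24 (by norm_num), sin_nat 204 36 (by norm_num), sin_nat 276 24 (by norm_num)]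
  rw [zred 84, zred 156, zred 204, zred 276]
  ring

lemma kY13 : SSY 13 = -SSX 1 := by
  simp only [SSX, SSY]
  rw [show (π * 7 * ((13:ℕ):ℝ) / 30) = ((91:ℕ):ℝ) * π / 30 by push_cast; ring]
  rw [show (π * 13 * ((13:ℕ):ℝ) / 30) = ((169:ℕ):ℝ) * π / 30 by push_cast; ring]
  rw [show (π * 17 * ((13:ℕ):ℝ) / 30) = ((221:ℕ):ℝ) * π / 30 by push_cast; ring]
  rw [show (π * 23 * ((13:ℕ):ℝ) / 30) = ((299:ℕ):ℝ) * π / 30 by push_cast; ring]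
  rw [show (π * 1 * ((1:ℕ):ℝ) / 30) = ((1:ℕ):ℝ) * π / 30 by push_cast; ring]
  rw [show (π * 11 * ((1:ℕ):ℝ) / 30) = ((11:ℕ):ℝ) * π / 30 by push_cast; ring]
  rw [show (π * 19 * ((1:ℕ):ℝ) / 30) = ((19:ℕ):ℝ) * π / 30 by push_cast; ring]
  rw [show (π * 29 * ((1:ℕ):ℝ) / 30) = ((29:ℕ):ℝ) * π / 30 by push_cast; ring]
  rw [sin_nat 91 29 (by norm_num), sin_nat 169 11 (by norm_num), sin_nat 221 19 (by norm_num), sin_nat 299 1 (by norm_num), sin_nat 1 59 (by norm_num), sin_nat 11 49 (by norm_num), sin_nat 19 41 (by norm_num), sin_nat 29 31 (by norm_num)]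
  rw [zred 91, zred 169, zred 221, zred 299]
  ring

lemma kY14 : SSY 14 = 0 := by
  simp only [SSX, SSY]
  rw [show (π * 7 * ((14:ℕ):ℝ) / 30) = ((98:ℕ):ℝ) * π / 30 by push_cast; ring]
  rw [show (π * 13 * ((14:ℕ):ℝ) / 30) = ((182:ℕ):ℝ) * π / 30 by push_cast; ring]
  rw [show (π * 17 * ((14:ℕ):ℝ) / 30) = ((238:ℕ):ℝ) * π / 30 by push_cast; ring]
  rw [show (π * 23 * ((14:ℕ):ℝ) / 30) = ((322:ℕ):ℝ) * π / 30 by push_cast; ring]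
  rw [sin_nat 98 22 (by norm_num), sin_nat 182 58 (by norm_num), sin_nat 238 2 (by norm_num), sin_nat 322 38 (by norm_num)]
  rw [zred 98, zred 182, zred 238, zred 322]
  ring

lemma kY15 : SSY 15 = 0 := by
  simp only [SSX, SSY]
  rw [show (π * 7 * ((15:ℕ):ℝ) / 30) = ((105:ℕ):ℝ) * π / 30 by push_cast; ring]
  rw [show (π * 13 * ((15:ℕ):ℝ) / 30) = ((195:ℕ):ℝ) * π / 30 by push_cast; ring]
  rw [show (π * 17 * ((15:ℕ):ℝ) / 30) = ((255:ℕ):ℝ) * π / 30 by push_cast; ring]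
  rw [show (π * 23 * ((15:ℕ):ℝ) / 30) = ((345:ℕ):ℝ) * π / 30 by push_cast; ring]
  rw [sin_nat 105 15 (by norm_num), sin_nat 195 45 (by norm_num), sin_nat 255 45 (by norm_num), sin_nat 345 15 (by norm_num)]
  rw [zred 105, zred 195, zred 255, zred 345]
  ring

lemma kY16 : SSY 16 = 0 := by
  simp only [SSX, SSY]
  rw [show (π * 7 * ((16:ℕ):ℝ) / 30) = ((112:ℕ):ℝ) * π / 30 by push_cast; ring]
  rw [show (π * 13 * ((16:ℕ):ℝ) / 30) = ((208:ℕ):ℝ) * π / 30 by push_cast; ring]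
  rw [show (π * 17 * ((16:ℕ):ℝ) / 30) = ((272:ℕ):ℝ) * π / 30 by push_cast; ring]
  rw [show (π * 23 * ((16:ℕ):ℝ) / 30) = ((368:ℕ):ℝ) * π / 30 by push_cast; ring]
  rw [sin_nat 112 8 (by norm_num), sin_nat 208 32 (by norm_num), sin_nat 272 28 (by norm_num), sin_nat 368 52 (by norm_num)]
  rw [zred 112, zred 208, zred 272, zred 368]
  ring

lemma kY17 : SSY 17 = -SSX 1 := by
  simp only [SSX, SSY]
  rw [show (π * 7 * ((17:ℕ):ℝ) / 30) = ((119:ℕ):ℝ) * π / 30 by push_cast; ring]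
  rw [show (π * 13 * ((17:ℕ):ℝ) / 30) = ((221:ℕ):ℝ) * π / 30 by push_cast; ring]
  rw [show (π * 17 * ((17:ℕ):ℝ) / 30) = ((289:ℕ):ℝ) * π / 30 by push_cast; ring]
  rw [show (π * 23 * ((17:ℕ):ℝ) / 30) = ((391:ℕ):ℝ) * π / 30 by push_cast; ring]
  rw [show (π * 1 * ((1:ℕ):ℝ) / 30) = ((1:ℕ):ℝ) * π / 30 by push_cast; ring]
  rw [show (π * 11 * ((1:ℕ):ℝ) / 30) = ((11:ℕ):ℝ) * π / 30 by push_cast; ring]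
  rw [show (π * 19 * ((1:ℕ):ℝ) / 30) = ((19:ℕ):ℝ) * π / 30 by push_cast; ring]
  rw [show (π * 29 * ((1:ℕ):ℝ) / 30) = ((29:ℕ):ℝ) * π / 30 by push_cast; ring]
  rw [sin_nat 119 1 (by norm_num), sin_nat 221 19 (by norm_num), sin_nat 289 11 (by norm_num), sin_nat 391 29 (by norm_num), sin_nat 1 59 (by norm_num), sin_nat 11 49 (by norm_num), sin_nat 19 41 (by norm_num), sin_nat 29 31 (by norm_num)]
  rw [zred 119, zred 221, zred 289, zred 391]
  ring

lemma kY18 : SSY 18 = 0 := by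
  simp only [SSX, SSY]
  rw [show (π * 7 * ((18:ℕ):ℝ) / 30) = ((126:ℕ):ℝ) * π / 30 by push_cast; ring]
  rw [show (π * 13 * ((18:ℕ):ℝ) / 30) = ((234:ℕ):ℝ) * π / 30 by push_cast; ring]
  rw [show (π * 17 * ((18:ℕ):ℝ) / 30) = ((306:ℕ):ℝ) * π / 30 by push_cast; ring]
  rw [show (π * 23 * ((18:ℕ):ℝ) / 30) = ((414:ℕ):ℝ) * π / 30 by push_cast; ring]
  rw [sin_nat 126 54 (by norm_num), sin_nat 234 6 (by norm_num), sin_nat 306 54 (by norm_num), sin_nat 414 6 (by norm_num)]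
  rw [zred 126, zred 234, zred 306, zred 414]
  ring

lemma kY19 : SSY 19 = SSX 7 := by
  simp only [SSX, SSY]
  rw [show (π * 7 * ((19:ℕ):ℝ) / 30) = ((133:ℕ):ℝ) * π / 30 by push_cast; ring]
  rw [show (π * 13 * ((19:ℕ):ℝ) / 30) = ((247:ℕ):ℝ) * π / 30 by push_cast; ring]
  rw [show (π * 17 * ((19:ℕ):ℝ) / 30) = ((323:ℕ):ℝ) * π / 30 by push_cast; ring]
  rw [show (π * 23 * ((19:ℕ):ℝ) / 30) = ((437:ℕ):ℝ) * π / 30 by push_cast; ring]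
  rw [show (π * 1 * ((7:ℕ):ℝ) / 30) = ((7:ℕ):ℝ) * π / 30 by push_cast; ring]
  rw [show (π * 11 * ((7:ℕ):ℝ) / 30) = ((77:ℕ):ℝ) * π / 30 by push_cast; ring]
  rw [show (π * 19 * ((7:ℕ):ℝ) / 30) = ((133:ℕ):ℝ) * π / 30 by push_cast; ring]
  rw [show (π * 29 * ((7:ℕ):ℝ) / 30) = ((203:ℕ):ℝ) * π / 30 by push_cast; ring]
  rw [sin_nat 133 47 (by norm_num), sin_nat 247 53 (by norm_num), sin_nat 323 37 (by norm_num), sin_nat 437 43 (by norm_num), sin_nat 7 53 (by norm_num), sin_nat 77 43 (by norm_num), sin_nat 203 37 (by norm_num)]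
  rw [zred 77, zred 133, zred 203, zred 247, zred 323, zred 437]
  ring

lemma kY20 : SSY 20 = 0 := by
  simp only [SSX, SSY]
  rw [show (π * 7 * ((20:ℕ):ℝ) / 30) = ((140:ℕ):ℝ) * π / 30 by push_cast; ring]
  rw [show (π * 13 * ((20:ℕ):ℝ) / 30) = ((260:ℕ):ℝ) * π / 30 by push_cast; ring]
  rw [show (π * 17 * ((20:ℕ):ℝ) / 30) = ((340:ℕ):ℝ) * π / 30 by push_cast; ring]
  rw [show (π * 23 * ((20:ℕ):ℝ) / 30) = ((460:ℕ):ℝ) * π / 30 by push_cast; ring]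
  rw [sin_nat 140 40 (by norm_num), sin_nat 260 40 (by norm_num), sin_nat 340 20 (by norm_num), sin_nat 460 20 (by norm_num)]
  rw [zred 140, zred 260, zred 340, zred 460]
  ring

lemma kY21 : SSY 21 = 0 := by
  simp only [SSX, SSY]
  rw [show (π * 7 * ((21:ℕ):ℝ) / 30) = ((147:ℕ):ℝ) * π / 30 by push_cast; ring]
  rw [show (π * 13 * ((21:ℕ):ℝ) / 30) = ((273:ℕ):ℝ) * π / 30 by push_cast; ring]
  rw [show (π * 17 * ((21:ℕ):ℝ) / 30) = ((357:ℕ):ℝ) * π / 30 by push_cast; ring]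
  rw [show (π * 23 * ((21:ℕ):ℝ) / 30) = ((483:ℕ):ℝ) * π / 30 by push_cast; ring]
  rw [sin_nat 147 33 (by norm_num), sin_nat 273 27 (by norm_num), sin_nat 357 3 (by norm_num), sin_nat 483 57 (by norm_num)]
  rw [zred 147, zred 273, zred 357, zred 483]
  ring

lemma kY22 : SSY 22 = 0 := by
  simp only [SSX, SSY]
  rw [show (π * 7 * ((22:ℕ):ℝ) / 30) = ((154:ℕ):ℝ) * π / 30 by push_cast; ring]
  rw [show (π * 13 * ((22:ℕ):ℝ) / 30) = ((286:ℕ):ℝ) * π / 30 by push_cast; ring]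
  rw [show (π * 17 * ((22:ℕ):ℝ) / 30) = ((374:ℕ):ℝ) * π / 30 by push_cast; ring]
  rw [show (π * 23 * ((22:ℕ):ℝ) / 30) = ((506:ℕ):ℝ) * π / 30 by push_cast; ring]
  rw [sin_nat 154 26 (by norm_num), sin_nat 286 14 (by norm_num), sin_nat 374 46 (by norm_num), sin_nat 506 34 (by norm_num)]
  rw [zred 154, zred 286, zred 374, zred 506]
  ring

lemma kY23 : SSY 23 = -SSX 1 := by
  simp only [SSX, SSY]
  rw [show (π * 7 * ((23:ℕ):ℝ) / 30) = ((161:ℕ):ℝ) * π / 30 by push_cast; ring]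
  rw [show (π * 13 * ((23:ℕ):ℝ) / 30) = ((299:ℕ):ℝ) * π / 30 by push_cast; ring]
  rw [show (π * 17 * ((23:ℕ):ℝ) / 30) = ((391:ℕ):ℝ) * π / 30 by push_cast; ring]
  rw [show (π * 23 * ((23:ℕ):ℝ) / 30) = ((529:ℕ):ℝ) * π / 30 by push_cast; ring]
  rw [show (π * 1 * ((1:ℕ):ℝ) / 30) = ((1:ℕ):ℝ) * π / 30 by push_cast; ring]
  rw [show (π * 11 * ((1:ℕ):ℝ) / 30) = ((11:ℕ):ℝ) * π / 30 by push_cast; ring]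
  rw [show (π * 19 * ((1:ℕ):ℝ) / 30) = ((19:ℕ):ℝ) * π / 30 by push_cast; ring]
  rw [show (π * 29 * ((1:ℕ):ℝ) / 30) = ((29:ℕ):ℝ) * π / 30 by push_cast; ring]
  rw [sin_nat 161 19 (by norm_num), sin_nat 299 1 (by norm_num), sin_nat 391 29 (by norm_num), sin_nat 529 11 (by norm_num), sin_nat 1 59 (by norm_num), sin_nat 11 49 (by norm_num), sin_nat 19 41 (by norm_num), sin_nat 29 31 (by norm_num)]
  rw [zred 161, zred 299, zred 391, zred 529]
  ring

lemma kY24 : SSY 24 = 0 := by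
  simp only [SSX, SSY]
  rw [show (π * 7 * ((24:ℕ):ℝ) / 30) = ((168:ℕ):ℝ) * π / 30 by push_cast; ring]
  rw [show (π * 13 * ((24:ℕ):ℝ) / 30) = ((312:ℕ):ℝ) * π / 30 by push_cast; ring]
  rw [show (π * 17 * ((24:ℕ):ℝ) / 30) = ((408:ℕ):ℝ) * π / 30 by push_cast; ring]
  rw [show (π * 23 * ((24:ℕ):ℝ) / 30) = ((552:ℕ):ℝ) * π / 30 by push_cast; ring]
  rw [sin_nat 168 12 (by norm_num), sin_nat 312 48 (by norm_num), sin_nat 408 12 (by norm_num), sin_nat 552 48 (by norm_num)]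
  rw [zred 168, zred 312, zred 408, zred 552]
  ring

lemma kY25 : SSY 25 = 0 := by
  simp only [SSX, SSY]
  rw [show (π * 7 * ((25:ℕ):ℝ) / 30) = ((175:ℕ):ℝ) * π / 30 by push_cast; ring]
  rw [show (π * 13 * ((25:ℕ):ℝ) / 30) = ((325:ℕ):ℝ) * π / 30 by push_cast; ring]
  rw [show (π * 17 * ((25:ℕ):ℝ) / 30) = ((425:ℕ):ℝ) * π / 30 by push_cast; ring]
  rw [show (π * 23 * ((25:ℕ):ℝ) / 30) = ((575:ℕ):ℝ) * π / 30 by push_cast; ring]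
  rw [sin_nat 175 5 (by norm_num), sin_nat 325 35 (by norm_num), sin_nat 425 55 (by norm_num), sin_nat 575 25 (by norm_num)]
  rw [zred 175, zred 325, zred 425, zred 575]
  ring

lemma kY26 : SSY 26 = 0 := by
  simp only [SSX, SSY]
  rw [show (π * 7 * ((26:ℕ):ℝ) / 30) = ((182:ℕ):ℝ) * π / 30 by push_cast; ring]
  rw [show (π * 13 * ((26:ℕ):ℝ) / 30) = ((338:ℕ):ℝ) * π / 30 by push_cast; ring]
  rw [show (π * 17 * ((26:ℕ):ℝ) / 30) = ((442:ℕ):ℝ) * π / 30 by push_cast; ring]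
  rw [show (π * 23 * ((26:ℕ):ℝ) / 30) = ((598:ℕ):ℝ) * π / 30 by push_cast; ring]
  rw [sin_nat 182 58 (by norm_num), sin_nat 338 22 (by norm_num), sin_nat 442 38 (by norm_num), sin_nat 598 2 (by norm_num)]
  rw [zred 182, zred 338, zred 442, zred 598]
  ring

lemma kY27 : SSY 27 = 0 := by
  simp only [SSX, SSY]
  rw [show (π * 7 * ((27:ℕ):ℝ) / 30) = ((189:ℕ):ℝ) * π / 30 by push_cast; ring]
  rw [show (π * 13 * ((27:ℕ):ℝ) / 30) = ((351:ℕ):ℝ) * π / 30 by push_cast; ring]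
  rw [show (π * 17 * ((27:ℕ):ℝ) / 30) = ((459:ℕ):ℝ) * π / 30 by push_cast; ring]
  rw [show (π * 23 * ((27:ℕ):ℝ) / 30) = ((621:ℕ):ℝ) * π / 30 by push_cast; ring]
  rw [sin_nat 189 51 (by norm_num), sin_nat 351 9 (by norm_num), sin_nat 459 21 (by norm_num), sin_nat 621 39 (by norm_num)]
  rw [zred 189, zred 351, zred 459, zred 621]
  ring

lemma kY28 : SSY 28 = 0 := by
  simp only [SSX, SSY]
  rw [show (π * 7 * ((28:ℕ):ℝ) / 30) = ((196:ℕ):ℝ) * π / 30 by push_cast; ring]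
  rw [show (π * 13 * ((28:ℕ):ℝ) / 30) = ((364:ℕ):ℝ) * π / 30 by push_cast; ring]
  rw [show (π * 17 * ((28:ℕ):ℝ) / 30) = ((476:ℕ):ℝ) * π / 30 by push_cast; ring]
  rw [show (π * 23 * ((28:ℕ):ℝ) / 30) = ((644:ℕ):ℝ) * π / 30 by push_cast; ring]
  rw [sin_nat 196 44 (by norm_num), sin_nat 364 56 (by norm_num), sin_nat 476 4 (by norm_num), sin_nat 644 16 (by norm_num)]
  rw [zred 196, zred 364, zred 476, zred 644]
  ring

lemma kY29 : SSY 29 = SSX 7 := by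
  simp only [SSX, SSY]
  rw [show (π * 7 * ((29:ℕ):ℝ) / 30) = ((203:ℕ):ℝ) * π / 30 by push_cast; ring]
  rw [show (π * 13 * ((29:ℕ):ℝ) / 30) = ((377:ℕ):ℝ) * π / 30 by push_cast; ring]
  rw [show (π * 17 * ((29:ℕ):ℝ) / 30) = ((493:ℕ):ℝ) * π / 30 by push_cast; ring]
  rw [show (π * 23 * ((29:ℕ):ℝ) / 30) = ((667:ℕ):ℝ) * π / 30 by push_cast; ring]
  rw [show (π * 1 * ((7:ℕ):ℝ) / 30) = ((7:ℕ):ℝ) * π / 30 by push_cast; ring]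
  rw [show (π * 11 * ((7:ℕ):ℝ) / 30) = ((77:ℕ):ℝ) * π / 30 by push_cast; ring]
  rw [show (π * 19 * ((7:ℕ):ℝ) / 30) = ((133:ℕ):ℝ) * π / 30 by push_cast; ring]
  rw [show (π * 29 * ((7:ℕ):ℝ) / 30) = ((203:ℕ):ℝ) * π / 30 by push_cast; ring]
  rw [sin_nat 203 37 (by norm_num), sin_nat 377 43 (by norm_num), sin_nat 493 47 (by norm_num), sin_nat 667 53 (by norm_num), sin_nat 7 53 (by norm_num), sin_nat 77 43 (by norm_num), sin_nat 133 47 (by norm_num)]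
  rw [zred 77, zred 133, zred 203, zred 377, zred 493, zred 667]
  ring


lemma keyX (b : ℕ) (h1 : 1 ≤ b) (h2 : b ≤ 29) :
    SSX b = (if b ∈ ({1,11,19,29} : Finset ℕ) then SSX 1 else 0) +
            (if b ∈ ({7,13,17,23} : Finset ℕ) then SSX 7 else 0) := by
  interval_cases b <;> norm_num [kX2, kX3, kX4, kX5, kX6, kX8, kX9, kX10, kX11, kX12, kX13, kX14, kX15, kX16, kX17, kX18, kX19, kX20, kX21, kX22, kX23, kX24, kX25, kX26, kX27, kX28, kX29]

lemma keyY (b : ℕ) (h1 : 1 ≤ b) (h2 : b ≤ 29) :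
    SSY b = (if b ∈ ({1,11,19,29} : Finset ℕ) then SSX 7 else 0) +
            (if b ∈ ({7,13,17,23} : Finset ℕ) then -SSX 1 else 0) := by
  interval_cases b <;> norm_num [kY1, kY2, kY3, kY4, kY5, kY6, kY7, kY8, kY9, kY10, kY11, kY12, kY13, kY14, kY15, kY16, kY17, kY18, kY19, kY20, kY21, kY22, kY23, kY24, kY25, kY26, kY27, kY28, kY29]

lemma helperL (a b : ℕ) :
    (∑ c ∈ Finset.Icc 1 29,
      (if (a ∈ ({1,11,19,29} : Finset ℕ) ∧ c ∈ ({1,11,19,29} : Finset ℕ)) ∨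
          (a ∈ ({7,13,17,23} : Finset ℕ) ∧ c ∈ ({7,13,17,23} : Finset ℕ)) then (1:ℂ) else 0) *
        ↑(Real.sqrt (2/30) * Real.sin (π * c * b / 30)))
    = ↑(Real.sqrt (2/30)) *
      ((if a ∈ ({1,11,19,29} : Finset ℕ) then SSX b else 0) +
       (if a ∈ ({7,13,17,23} : Finset ℕ) then SSY b else 0)) := by
  by_cases haX : a ∈ ({1,11,19,29} : Finset ℕ) <;> by_cases haY : a ∈ ({7,13,17,23} : Finset ℕ)
  · exfalso; fin_cases haX <;> exact absurd haY (by decide)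
  · simp only [haX, haY, true_and, false_and, or_false, if_true, if_false, ite_mul, one_mul,
      zero_mul, add_zero]
    rw [Finset.sum_ite_mem]
    rw [show Finset.Icc (1:ℕ) 29 ∩ ({1,11,19,29} : Finset ℕ) = ({1,11,19,29} : Finset ℕ) by decide]
    rw [show ({1,11,19,29} : Finset ℕ) = insert 1 (insert 11 (insert 19 {29})) from rfl]
    rw [Finset.sum_insert (by decide), Finset.sum_insert (by decide), Finset.sum_insert (by decide),
      Finset.sum_singleton]
    simp only [SSX]
    push_cast
    ring
  · simp only [haX, haY, true_and, false_and, or_false, false_or, if_true, if_false, ite_mul,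
      one_mul, zero_mul, zero_add]
    rw [Finset.sum_ite_mem]
    rw [show Finset.Icc (1:ℕ) 29 ∩ ({7,13,17,23} : Finset ℕ) = ({7,13,17,23} : Finset ℕ) by decide]
    rw [show ({7,13,17,23} : Finset ℕ) = insert 7 (insert 13 (insert 17 {23})) from rfl]
    rw [Finset.sum_insert (by decide), Finset.sum_insert (by decide), Finset.sum_insert (by decide),
      Finset.sum_singleton]
    simp only [SSY]
    push_cast
    ring
  · simp only [haX, haY, false_and, or_self, if_false, zero_mul, Finset.sum_const_zero, add_zero,
      mul_zero]

lemma helperR (a b : ℕ) :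
    (∑ c ∈ Finset.Icc 1 29,
      ↑(Real.sqrt (2/30) * Real.sin (π * a * c / 30)) *
      (if (c ∈ ({1,11,19,29} : Finset ℕ) ∧ b ∈ ({1,11,19,29} : Finset ℕ)) ∨
          (c ∈ ({7,13,17,23} : Finset ℕ) ∧ b ∈ ({7,13,17,23} : Finset ℕ)) then (1:ℂ) else 0))
    = ↑(Real.sqrt (2/30)) *
      ((if b ∈ ({1,11,19,29} : Finset ℕ) then SSX a else 0) +
       (if b ∈ ({7,13,17,23} : Finset ℕ) then SSY a else 0)) := by
  by_cases hbX : b ∈ ({1,11,19,29} : Finset ℕ) <;> by_cases hbY : b ∈ ({7,13,17,23} : Finset ℕ)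
  · exfalso; fin_cases hbX <;> exact absurd hbY (by decide)
  · simp only [hbX, hbY, and_true, and_false, or_false, if_true, if_false, mul_ite, mul_one,
      mul_zero, add_zero]
    rw [Finset.sum_ite_mem]
    rw [show Finset.Icc (1:ℕ) 29 ∩ ({1,11,19,29} : Finset ℕ) = ({1,11,19,29} : Finset ℕ) by decide]
    rw [show ({1,11,19,29} : Finset ℕ) = insert 1 (insert 11 (insert 19 {29})) from rfl]
    rw [Finset.sum_insert (by decide), Finset.sum_insert (by decide), Finset.sum_insert (by decide),
      Finset.sum_singleton]
    rw [show (π * (a:ℝ) * ((1:ℕ):ℝ) / 30) = π * 1 * (a:ℝ) / 30 by push_cast; ring]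
    rw [show (π * (a:ℝ) * ((11:ℕ):ℝ) / 30) = π * 11 * (a:ℝ) / 30 by push_cast; ring]
    rw [show (π * (a:ℝ) * ((19:ℕ):ℝ) / 30) = π * 19 * (a:ℝ) / 30 by push_cast; ring]
    rw [show (π * (a:ℝ) * ((29:ℕ):ℝ) / 30) = π * 29 * (a:ℝ) / 30 by push_cast; ring]
    simp only [SSX]
    push_cast
    ring
  · simp only [hbX, hbY, and_true, and_false, or_false, false_or, if_true, if_false, mul_ite,
      mul_one, mul_zero, zero_add]
    rw [Finset.sum_ite_mem]
    rw [show Finset.Icc (1:ℕ) 29 ∩ ({7,13,17,23} : Finset ℕ) = ({7,13,17,23} : Finset ℕ) by decide]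
    rw [show ({7,13,17,23} : Finset ℕ) = insert 7 (insert 13 (insert 17 {23})) from rfl]
    rw [Finset.sum_insert (by decide), Finset.sum_insert (by decide), Finset.sum_insert (by decide),
      Finset.sum_singleton]
    rw [show (π * (a:ℝ) * ((7:ℕ):ℝ) / 30) = π * 7 * (a:ℝ) / 30 by push_cast; ring]
    rw [show (π * (a:ℝ) * ((13:ℕ):ℝ) / 30) = π * 13 * (a:ℝ) / 30 by push_cast; ring]
    rw [show (π * (a:ℝ) * ((17:ℕ):ℝ) / 30) = π * 17 * (a:ℝ) / 30 by push_cast; ring]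
    rw [show (π * (a:ℝ) * ((23:ℕ):ℝ) / 30) = π * 23 * (a:ℝ) / 30 by push_cast; ring]
    simp only [SSY]
    push_cast
    ring
  · simp only [hbX, hbY, and_false, or_self, if_false, mul_zero, Finset.sum_const_zero, add_zero]

lemma E_mod (n : ℕ) :
    Complex.exp (↑Real.pi * Complex.I * ((n:ℕ):ℂ) / 60) =
    Complex.exp (↑Real.pi * Complex.I * (((n % 120):ℕ):ℂ) / 60) := by
  conv_lhs => rw [show n = 120 * (n / 120) + n % 120 from (Nat.div_add_mod n 120).symm]
  rw [show ((↑(120 * (n/120) + n % 120):ℂ)) = 120 * ((n/120 : ℕ):ℂ) + ((n % 120 : ℕ):ℂ) by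
    push_cast; ring]
  rw [show (↑Real.pi * Complex.I * (120 * ((n/120:ℕ):ℂ) + ((n%120:ℕ):ℂ))/60) =
      ((n/120:ℕ):ℂ) * (2*↑Real.pi*Complex.I) + ↑Real.pi * Complex.I * ((n%120:ℕ):ℂ)/60 by ring]
  rw [Complex.exp_add, Complex.exp_nat_mul, Complex.exp_two_pi_mul_I, one_pow, one_mul]

lemma Esq2 (a b : ℕ) (h : a^2 % 120 = b^2 % 120) :
    Complex.exp (↑Real.pi * Complex.I * (a:ℂ)^2 / 60) =
    Complex.exp (↑Real.pi * Complex.I * (b:ℂ)^2 / 60) := by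
  rw [show ((a:ℂ))^2 = ((a^2:ℕ):ℂ) by push_cast; ring,
      show ((b:ℂ))^2 = ((b^2:ℕ):ℂ) by push_cast; ring,
      E_mod (a^2), E_mod (b^2), h]

theorem stmt_17 (S T M : ℕ → ℕ → ℂ)
    (hS : ∀ a b, S a b =
      ((Real.sqrt (2 / 30) * Real.sin (π * a * b / 30) : ℝ) : ℂ))
    (hT : ∀ a b, T a b =
      Complex.exp (Real.pi * Complex.I * a ^ 2 / 60) * (if a = b then 1 else 0))
    (hM : ∀ a b, M a b =
      if (a ∈ ({1, 11, 19, 29} : Finset ℕ) ∧ b ∈ ({1, 11, 19, 29} : Finset ℕ)) ∨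
         (a ∈ ({7, 13, 17, 23} : Finset ℕ) ∧ b ∈ ({7, 13, 17, 23} : Finset ℕ))
      then 1 else 0) :
    (∀ a ∈ Finset.Icc 1 29, ∀ b ∈ Finset.Icc 1 29,
      ∑ c ∈ Finset.Icc 1 29, M a c * S c b = ∑ c ∈ Finset.Icc 1 29, S a c * M c b) ∧
    (∀ a ∈ Finset.Icc 1 29, ∀ b ∈ Finset.Icc 1 29,
      ∑ c ∈ Finset.Icc 1 29, M a c * T c b = ∑ c ∈ Finset.Icc 1 29, T a c * M c b) ∧
    (∀ a ∈ Finset.Icc 1 29, ∀ b ∈ Finset.Icc 1 29, ∃ m : ℕ, M a b = m) ∧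
    M 1 1 = 1 := by
  refine ⟨?_, ?_, ?_, ?_⟩
  · intro a ha b hb
    obtain ⟨ha1, ha2⟩ := Finset.mem_Icc.mp ha
    obtain ⟨hb1, hb2⟩ := Finset.mem_Icc.mp hb
    simp only [hM, hS]
    rw [helperL, helperR]
    rw [keyX b hb1 hb2, keyY b hb1 hb2, keyX a ha1 ha2, keyY a ha1 ha2]
    split_ifs <;> ring
  · intro a ha b hb
    simp only [hM, hT]
    rw [Finset.sum_eq_single_of_mem b hb (fun c _ hc => by simp [hc]),
        Finset.sum_eq_single_of_mem a ha (fun c _ hc => by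
          have : a ≠ c := fun h => hc h.symm
          simp [this])]
    rw [if_pos rfl, if_pos rfl, mul_one, mul_one]
    by_cases h : (a ∈ ({1, 11, 19, 29} : Finset ℕ) ∧ b ∈ ({1, 11, 19, 29} : Finset ℕ)) ∨
         (a ∈ ({7, 13, 17, 23} : Finset ℕ) ∧ b ∈ ({7, 13, 17, 23} : Finset ℕ))
    · rw [if_pos h, one_mul, mul_one]
      obtain ⟨hA, hB⟩ | ⟨hA, hB⟩ := h <;> fin_cases hA <;> fin_cases hB <;>
        exact Esq2 _ _ (by norm_num)
    · rw [if_neg h]; ring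
  · intro a _ b _
    rw [hM]
    split_ifs
    exacts [⟨1, by norm_num⟩, ⟨0, by norm_num⟩]
  · rw [hM]
    norm_num
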